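/- Let E be a linear map on n×n complex matrices that is idempotent (E∘E = E), unital, positive, and faithful (E(A) = 0 and A PSD imply A = 0), and satisfies the conditional expectation (bimodule) property E(E(A)·B·E(C)) = E(A)·E(B)·E(C). If X satisfies E(X*X) = E(X)*E(X), then X = E(X), i.e. X lies in the range of E. -/
import Mathlib

open Matrix
open scoped ComplexOrder

lemma herm_decomp {n : ℕ} {H : Matrix (Fin n) (Fin n) ℂ} (hH : H.IsHermitian) :
    ∃ P N : Matrix (Fin n) (Fin n) ℂ, P.PosSemidef ∧ N.PosSemidef ∧ H = P - N := by
  classical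
  set U : Matrix (Fin n) (Fin n) ℂ := (hH.eigenvectorUnitary : Matrix (Fin n) (Fin n) ℂ) with hU
  refine ⟨U * diagonal (fun i => ((max (hH.eigenvalues i) 0 : ℝ) : ℂ)) * star U,
          U * diagonal (fun i => ((max (-hH.eigenvalues i) 0 : ℝ) : ℂ)) * star U, ?_, ?_, ?_⟩
  · exact (posSemidef_diagonal_iff.mpr fun i => by
      exact_mod_cast Complex.zero_le_real.mpr (le_max_right _ _)).mul_mul_conjTranspose_same U
  · exact (posSemidef_diagonal_iff.mpr fun i => by
      exact_mod_cast Complex.zero_le_real.mpr (le_max_right _ _)).mul_mul_conjTranspose_same U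
  · have key : U * diagonal (fun i => ((max (hH.eigenvalues i) 0 : ℝ) : ℂ)) * star U -
        U * diagonal (fun i => ((max (-hH.eigenvalues i) 0 : ℝ) : ℂ)) * star U =
        U * diagonal (RCLike.ofReal ∘ hH.eigenvalues) * star U := by
      rw [← sub_mul, ← mul_sub, diagonal_sub]
      have hfun : (fun i => ((max (hH.eigenvalues i) 0 : ℝ) : ℂ) - ((max (-hH.eigenvalues i) 0 : ℝ) : ℂ))
          = (RCLike.ofReal ∘ hH.eigenvalues) := by
        funext i
        show ((max (hH.eigenvalues i) 0 : ℝ) : ℂ) - ((max (-hH.eigenvalues i) 0 : ℝ) : ℂ)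
          = ((hH.eigenvalues i : ℝ) : ℂ)
        rw [← Complex.ofReal_sub, Complex.ofReal_inj]
        rcases le_total (hH.eigenvalues i) 0 with h | h
        · rw [max_eq_right h, max_eq_left (neg_nonneg.mpr h)]; ring
        · rw [max_eq_left h, max_eq_right (neg_nonpos.mpr h)]; ring
      rw [hfun]
    rw [key]
    exact hH.spectral_theorem

theorem stmt_18 {n : ℕ}
    (E : Matrix (Fin n) (Fin n) ℂ →ₗ[ℂ] Matrix (Fin n) (Fin n) ℂ)
    (hunital : E 1 = 1)
    (hbimod : ∀ A B C, E (E A * B * E C) = E A * E B * E C)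
    (hpos : ∀ X : Matrix (Fin n) (Fin n) ℂ, X.PosSemidef → (E X).PosSemidef)
    (hfaithful : ∀ X : Matrix (Fin n) (Fin n) ℂ, X.PosSemidef → E X = 0 → X = 0)
    (hidem : ∀ X, E (E X) = E X)
    (X : Matrix (Fin n) (Fin n) ℂ)
    (hX : E (Xᴴ * X) = (E X)ᴴ * (E X)) :
    X = E X := by
  -- E preserves Hermitian matrices
  have hherm : ∀ H : Matrix (Fin n) (Fin n) ℂ, H.IsHermitian → (E H).IsHermitian := by
    intro H hH
    obtain ⟨P, N, hP, hN, hPN⟩ := herm_decomp hH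
    have : E H = E P - E N := by rw [hPN, map_sub]
    rw [this]
    exact ((hpos P hP).isHermitian).sub ((hpos N hN).isHermitian)
  -- E is star-preserving
  have hstar : ∀ A : Matrix (Fin n) (Fin n) ℂ, E Aᴴ = (E A)ᴴ := by
    intro A
    set H : Matrix (Fin n) (Fin n) ℂ := A + Aᴴ with hHdef
    set K : Matrix (Fin n) (Fin n) ℂ := (-Complex.I) • (A - Aᴴ) with hKdef
    have hHh : H.IsHermitian := by
      simp [Matrix.IsHermitian, hHdef, conjTranspose_add, add_comm]
    have hKh : K.IsHermitian := by
      simp only [Matrix.IsHermitian, hKdef, conjTranspose_smul, conjTranspose_sub,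
        conjTranspose_conjTranspose]
      rw [show star (-Complex.I) = Complex.I by simp]
      module
    have hA : A = (2⁻¹ : ℂ) • (H + Complex.I • K) := by
      rw [hHdef, hKdef, smul_smul]
      rw [show Complex.I * -Complex.I = 1 by simp [Complex.I_mul_I]]
      module
    have hAH : Aᴴ = (2⁻¹ : ℂ) • (H - Complex.I • K) := by
      rw [hHdef, hKdef, smul_smul]
      rw [show Complex.I * -Complex.I = 1 by simp [Complex.I_mul_I]]
      module
    have eEA : E A = (2⁻¹ : ℂ) • (E H + Complex.I • E K) := by
      conv_lhs => rw [hA]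
      rw [_root_.map_smul, map_add, _root_.map_smul]
    have eEAH : E Aᴴ = (2⁻¹ : ℂ) • (E H - Complex.I • E K) := by
      conv_lhs => rw [hAH]
      rw [_root_.map_smul, map_sub, _root_.map_smul]
    rw [eEA, eEAH, conjTranspose_smul, conjTranspose_add, conjTranspose_smul,
      (hherm H hHh).eq, (hherm K hKh).eq,
      show star (2⁻¹ : ℂ) = 2⁻¹ by simp,
      show star Complex.I = -Complex.I by simp]
    module
  set Y : Matrix (Fin n) (Fin n) ℂ := X - E X with hYdef
  have h1 : E (Xᴴ * E X) = (E X)ᴴ * E X := by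
    have := hbimod 1 Xᴴ X
    rw [hunital, one_mul] at this
    rw [this, hstar, one_mul]
  have h2 : E ((E X)ᴴ * X) = (E X)ᴴ * E X := by
    have := hbimod Xᴴ X 1
    rw [hunital, mul_one] at this
    rw [← hstar, this, hstar, mul_one]
  have h3 : E ((E X)ᴴ * E X) = (E X)ᴴ * E X := by
    have := hbimod Xᴴ 1 X
    rw [mul_one, hunital] at this
    rw [← hstar, this, hstar, mul_one]
  have hexp : Yᴴ * Y = Xᴴ * X - Xᴴ * E X - (E X)ᴴ * X + (E X)ᴴ * E X := by
    rw [hYdef, conjTranspose_sub, sub_mul, mul_sub, mul_sub]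
    abel
  have hEY : E (Yᴴ * Y) = 0 := by
    rw [hexp, map_add, map_sub, map_sub, hX, h1, h2, h3]
    abel
  have hYpsd : (Yᴴ * Y).PosSemidef := posSemidef_conjTranspose_mul_self Y
  have := hfaithful _ hYpsd hEY
  have hY0 : Y = 0 := conjTranspose_mul_self_eq_zero.mp this
  rw [hYdef, sub_eq_zero] at hY0
  exact hY0
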